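/- If A is a d₁-dimensional permutation of order n and B is a vertex of Ω_n^{d₂}, then the dot product A · B is a vertex of Ω_n^{d₁+d₂−2}, with support size N(A·B) = n^{d₁−2} · N(B). -/

import Mathlib

def isPolystochastic (d n : ℕ) (A : (Fin d → Fin n) → ℝ) : Prop :=
  (∀ α, 0 ≤ A α) ∧
  ∀ (k : Fin d) (α : Fin d → Fin n), ∑ x : Fin n, A (Function.update α k x) = 1

def isVertex (d n : ℕ) (A : (Fin d → Fin n) → ℝ) : Prop :=
  isPolystochastic d n A ∧
  ∀ B C : (Fin d → Fin n) → ℝ, isPolystochastic d n B → isPolystochastic d n C →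
    ∀ t : ℝ, 0 < t → t < 1 → (∀ α, A α = t * B α + (1 - t) * C α) → B = A ∧ C = A

def isMPerm (d n : ℕ) (A : (Fin d → Fin n) → ℝ) : Prop :=
  isPolystochastic d n A ∧ ∀ α, A α = 0 ∨ A α = 1

def msupport {d n : ℕ} (A : (Fin d → Fin n) → ℝ) : Set (Fin d → Fin n) := {α | A α ≠ 0}

/-- The dot product of a `(e₁+1)`-dimensional and a `(e₂+1)`-dimensional matrix of order `n`,
a `(e₁+e₂)`-dimensional matrix of order `n`. -/
def dot {e₁ e₂ n : ℕ} (A : (Fin (e₁ + 1) → Fin n) → ℝ) (B : (Fin (e₂ + 1) → Fin n) → ℝ) :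
    (Fin (e₁ + e₂) → Fin n) → ℝ := fun γ =>
  ∑ x : Fin n,
    A (Fin.snoc (fun j => γ (Fin.castAdd e₂ j)) x) *
    B (Fin.cons x (fun j => γ (Fin.natAdd e₁ j)))

section Aux
open Finset Function Fin
variable {n f e₂ : ℕ} {A : (Fin (f + 1 + 1) → Fin n) → ℝ}

lemma sum_eq_one_unique {g : Fin n → ℝ} (h0 : ∀ x, 0 ≤ g x) (h1 : ∑ x, g x = 1)
    {x y : Fin n} (hx : g x = 1) (hy : g y = 1) : x = y := by
  by_contra hne
  have h2 : g x + g y ≤ ∑ z, g z := by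
    have := Finset.sum_le_sum_of_subset_of_nonneg (Finset.subset_univ ({x, y} : Finset (Fin n)))
      (fun i _ _ => h0 i)
    rwa [Finset.sum_pair hne] at this
  rw [hx, hy, h1] at h2
  linarith

lemma sum_snoc (hA : isMPerm (f + 1 + 1) n A) (β : Fin (f + 1) → Fin n) :
    ∑ x : Fin n, A (Fin.snoc β x) = 1 := by
  have h := hA.1.2 (Fin.last (f + 1)) (Fin.snoc β (β 0))
  simpa [Fin.update_snoc_last] using h

noncomputable def sig (A : (Fin (f + 1 + 1) → Fin n) → ℝ) (β : Fin (f + 1) → Fin n) : Fin n :=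
  if h : ∃ x, A (Fin.snoc β x) = 1 then h.choose else β 0

lemma sig_spec (hA : isMPerm (f + 1 + 1) n A) (β : Fin (f + 1) → Fin n) :
    A (Fin.snoc β (sig A β)) = 1 := by
  have hex : ∃ x, A (Fin.snoc β x) = 1 := by
    by_contra hno
    push_neg at hno
    have hz : ∀ x, A (Fin.snoc β x) = 0 := fun x => (hA.2 _).resolve_right (hno x)
    have hs := sum_snoc hA β
    simp [hz] at hs
  rw [sig, dif_pos hex]
  exact hex.choose_spec

lemma sig_eq_of (hA : isMPerm (f + 1 + 1) n A) {β : Fin (f + 1) → Fin n} {x : Fin n}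
    (h : A (Fin.snoc β x) = 1) : sig A β = x :=
  sum_eq_one_unique (fun z => hA.1.1 _) (sum_snoc hA β) (sig_spec hA β) h

lemma sig_update_bij (hA : isMPerm (f + 1 + 1) n A) (k : Fin (f + 1)) (β : Fin (f + 1) → Fin n) :
    Function.Bijective (fun x => sig A (Function.update β k x)) := by
  rw [← Finite.injective_iff_bijective]
  intro x x' hxx
  simp only at hxx
  have h1 : A (Fin.snoc (Function.update β k x) (sig A (Function.update β k x))) = 1 :=
    sig_spec hA _
  have h2 : A (Fin.snoc (Function.update β k x') (sig A (Function.update β k x))) = 1 := by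
    rw [hxx]; exact sig_spec hA _
  rw [Fin.snoc_update] at h1 h2
  exact sum_eq_one_unique (fun z => hA.1.1 _)
    (hA.1.2 k.castSucc (Fin.snoc β (sig A (Function.update β k x)))) h1 h2

lemma append_update_left {m k : ℕ} (u : Fin m → Fin n) (v : Fin k → Fin n) (i : Fin m)
    (x : Fin n) :
    Fin.append (Function.update u i x) v
      = Function.update (Fin.append u v) (Fin.castAdd k i) x := by
  funext j
  refine Fin.addCases (fun j => ?_) (fun j => ?_) j
  · rw [Fin.append_left]
    by_cases hj : j = i
    · subst hj; simp
    · rw [Function.update_of_ne hj, Function.update_of_ne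
        (fun h => hj (Fin.castAdd_injective _ _ h)), Fin.append_left]
  · rw [Fin.append_right, Function.update_of_ne (by
      intro h
      have := congrArg Fin.val h
      simp only [Fin.coe_natAdd, Fin.coe_castAdd] at this
      omega), Fin.append_right]

lemma append_update_right {m k : ℕ} (u : Fin m → Fin n) (v : Fin k → Fin n) (i : Fin k)
    (x : Fin n) :
    Fin.append u (Function.update v i x)
      = Function.update (Fin.append u v) (Fin.natAdd m i) x := by
  funext j
  refine Fin.addCases (fun j => ?_) (fun j => ?_) j
  · rw [Fin.append_left, Function.update_of_ne (by
      intro h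
      have := congrArg Fin.val h
      simp only [Fin.coe_natAdd, Fin.coe_castAdd] at this
      omega), Fin.append_left]
  · rw [Fin.append_right]
    by_cases hj : j = i
    · subst hj; simp
    · rw [Function.update_of_ne hj, Function.update_of_ne
        (show Fin.natAdd m j ≠ Fin.natAdd m i by
          intro h
          exact hj (Fin.ext (by have := congrArg Fin.val h; simpa using this))),
        Fin.append_right]

lemma dot_append (hA : isMPerm (f + 1 + 1) n A) (B : (Fin (e₂ + 1) → Fin n) → ℝ)
    (β : Fin (f + 1) → Fin n) (δ : Fin e₂ → Fin n) :
    dot A B (Fin.append β δ) = B (Fin.cons (sig A β) δ) := by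
  unfold dot
  simp only [Fin.append_left, Fin.append_right]
  rw [Finset.sum_eq_single (sig A β)]
  · rw [sig_spec hA, one_mul]
  · intro x _ hx
    rcases hA.2 (Fin.snoc β x) with h0 | h1
    · rw [h0, zero_mul]
    · exact absurd (sig_eq_of hA h1).symm hx
  · intro h; exact absurd (Finset.mem_univ _) h

lemma dot_apply (hA : isMPerm (f + 1 + 1) n A) (B : (Fin (e₂ + 1) → Fin n) → ℝ)
    (γ : Fin (f + 1 + e₂) → Fin n) :
    dot A B γ = B (Fin.cons (sig A fun j => γ (Fin.castAdd e₂ j))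
      fun j => γ (Fin.natAdd (f + 1) j)) := by
  conv_lhs => rw [← Fin.append_castAdd_natAdd (f := γ)]
  exact dot_append hA B _ _

lemma dot_poly (hA : isMPerm (f + 1 + 1) n A) {B : (Fin (e₂ + 1) → Fin n) → ℝ}
    (hB : isPolystochastic (e₂ + 1) n B) :
    isPolystochastic (f + 1 + e₂) n (dot A B) := by
  constructor
  · intro γ
    rw [dot_apply hA]
    exact hB.1 _
  · intro k γ
    rw [show γ = Fin.append (fun j => γ (Fin.castAdd e₂ j)) (fun j => γ (Fin.natAdd (f + 1) j))
      from Fin.append_castAdd_natAdd.symm]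
    set β : Fin (f + 1) → Fin n := fun j => γ (Fin.castAdd e₂ j) with hβ
    set δ : Fin e₂ → Fin n := fun j => γ (Fin.natAdd (f + 1) j) with hδ
    clear_value β δ
    refine Fin.addCases (motive := fun k =>
      ∑ x : Fin n, dot A B (Function.update (Fin.append β δ) k x) = 1)
      (fun j => ?_) (fun j => ?_) k
    · simp only [← append_update_left, dot_append hA]
      calc ∑ x, B (Fin.cons (sig A (Function.update β j x)) δ)
          = ∑ y, B (Fin.cons y δ) :=
            Fintype.sum_bijective _ (sig_update_bij hA j β) _ _ (fun x => rfl)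
        _ = 1 := by simpa [Fin.update_cons_zero] using hB.2 0 (Fin.cons (sig A β) δ)
    · simp only [← append_update_right, dot_append hA, Fin.cons_update]
      exact hB.2 j.succ (Fin.cons (sig A β) δ)

lemma comp_eq (hA : isMPerm (f + 1 + 1) n A) {B : (Fin (e₂ + 1) → Fin n) → ℝ}
    (hB : isVertex (e₂ + 1) n B) {C D : (Fin (f + 1 + e₂) → Fin n) → ℝ}
    (hC : isPolystochastic (f + 1 + e₂) n C) (hD : isPolystochastic (f + 1 + e₂) n D)
    {t : ℝ} (ht0 : 0 < t) (ht1 : t < 1)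
    (h : ∀ γ, dot A B γ = t * C γ + (1 - t) * D γ) : C = dot A B := by
  funext γ
  rw [show γ = Fin.append (fun j => γ (Fin.castAdd e₂ j)) (fun j => γ (Fin.natAdd (f + 1) j))
    from Fin.append_castAdd_natAdd.symm]
  set β : Fin (f + 1) → Fin n := fun j => γ (Fin.castAdd e₂ j) with hβ
  set δ : Fin e₂ → Fin n := fun j => γ (Fin.natAdd (f + 1) j) with hδ
  clear_value β δ
  set e : Fin n ≃ Fin n := Equiv.ofBijective _ (sig_update_bij hA 0 β) with he
  set Cb : (Fin (e₂ + 1) → Fin n) → ℝ :=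
    fun α => C (Fin.append (Function.update β 0 (e.symm (α 0))) (Fin.tail α)) with hCb
  set Db : (Fin (e₂ + 1) → Fin n) → ℝ :=
    fun α => D (Fin.append (Function.update β 0 (e.symm (α 0))) (Fin.tail α)) with hDb
  have poly : ∀ (P : (Fin (f + 1 + e₂) → Fin n) → ℝ), isPolystochastic (f + 1 + e₂) n P →
      isPolystochastic (e₂ + 1) n
        (fun α => P (Fin.append (Function.update β 0 (e.symm (α 0))) (Fin.tail α))) := by
    intro P hP
    constructor
    · intro α; exact hP.1 _
    · intro k α
      refine Fin.cases ?_ (fun j => ?_) k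
      · simp only [Function.update_self, Fin.tail_update_zero]
        calc ∑ x, P (Fin.append (Function.update β 0 (e.symm x)) (Fin.tail α))
            = ∑ z, P (Fin.append (Function.update β 0 z) (Fin.tail α)) :=
              Fintype.sum_equiv e.symm _ _ (fun x => rfl)
          _ = 1 := by
              simp only [append_update_left]
              exact hP.2 (Fin.castAdd e₂ 0) (Fin.append β (Fin.tail α))
      · have h0 : ∀ x : Fin n, (Function.update α j.succ x) 0 = α 0 :=
          fun x => Function.update_of_ne (Ne.symm (Fin.succ_ne_zero j)) _ _
        simp only [Fin.tail_update_succ, h0, append_update_right]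
        exact hP.2 (Fin.natAdd (f + 1) j) _
  have hdec : ∀ α, B α = t * Cb α + (1 - t) * Db α := by
    intro α
    have h1 : B α
        = dot A B (Fin.append (Function.update β 0 (e.symm (α 0))) (Fin.tail α)) := by
      rw [dot_append hA]
      have h2 : sig A (Function.update β 0 (e.symm (α 0))) = α 0 := e.apply_symm_apply (α 0)
      rw [h2, Fin.cons_self_tail]
    rw [h1, h]
  obtain ⟨hCB, hDB⟩ := hB.2 Cb Db (poly C hC) (poly D hD) t ht0 ht1 hdec
  have h2 : e (β 0) = sig A β := by
    show sig A (Function.update β 0 (β 0)) = sig A β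
    rw [Function.update_eq_self]
  have h3 : e.symm (sig A β) = β 0 := by rw [← h2, Equiv.symm_apply_apply]
  have key : Cb (Fin.cons (sig A β) δ) = C (Fin.append β δ) := by
    rw [hCb]
    simp only [Fin.cons_zero, Fin.tail_cons, h3, Function.update_eq_self]
  rw [dot_append hA, ← hCB]
  exact key.symm

lemma card_sig_fiber (hA : isMPerm (f + 1 + 1) n A) (y : Fin n) :
    (Finset.univ.filter (fun β : Fin (f + 1) → Fin n => sig A β = y)).card = n ^ f := by
  classical
  have hcast : ((Finset.univ.filter (fun β : Fin (f + 1) → Fin n => sig A β = y)).card : ℝ)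
      = ∑ β : Fin (f + 1) → Fin n, A (Fin.snoc β y) := by
    rw [Finset.card_filter, Nat.cast_sum]
    refine Finset.sum_congr rfl (fun β _ => ?_)
    by_cases hb : sig A β = y
    · rw [if_pos hb, ← hb, sig_spec hA, Nat.cast_one]
    · rw [if_neg hb, Nat.cast_zero]
      rcases hA.2 (Fin.snoc β y) with h0 | h1
      · exact h0.symm
      · exact absurd (sig_eq_of hA h1) hb
  have hsum : ∑ β : Fin (f + 1) → Fin n, A (Fin.snoc β y) = (n : ℝ) ^ f := by
    rw [← (Fin.consEquiv (fun _ : Fin (f + 1) => Fin n)).sum_comp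
      (fun β => A (Fin.snoc β y))]
    rw [Fintype.sum_prod_type]
    have hline : ∀ b : Fin f → Fin n,
        ∑ x : Fin n, A (Fin.snoc (Fin.cons x b) y) = 1 := by
      intro b
      have h := hA.1.2 0 (Fin.cons y (Fin.snoc b y))
      simp only [Fin.update_cons_zero] at h
      calc ∑ x : Fin n, A (Fin.snoc (Fin.cons x b) y)
          = ∑ x : Fin n, A (Fin.cons x (Fin.snoc b y)) := by
            refine Finset.sum_congr rfl (fun x _ => ?_)
            rw [Fin.cons_snoc_eq_snoc_cons]
        _ = 1 := h
    have hce : ∀ (x : Fin n) (b : Fin f → Fin n),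
        (Fin.consEquiv fun _ : Fin (f + 1) => Fin n) (x, b) = Fin.cons x b := fun _ _ => rfl
    simp only [hce]
    rw [Finset.sum_comm]
    simp only [hline]
    simp [Finset.card_univ]
  have := hcast.trans hsum
  exact_mod_cast this

lemma card_msupport (hA : isMPerm (f + 1 + 1) n A) (B : (Fin (e₂ + 1) → Fin n) → ℝ) :
    (msupport (dot A B)).ncard = n ^ f * (msupport B).ncard := by
  classical
  set Φ : (Fin (f + 1 + e₂) → Fin n) → (Fin (e₂ + 1) → Fin n) :=
    fun γ => Fin.cons (sig A fun j => γ (Fin.castAdd e₂ j)) fun j => γ (Fin.natAdd (f + 1) j)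
    with hΦ
  have hdγ : ∀ γ, dot A B γ = B (Φ γ) := fun γ => dot_apply hA B γ
  set S : Finset (Fin (e₂ + 1) → Fin n) := Finset.univ.filter (fun α => B α ≠ 0) with hS
  set T : Finset (Fin (f + 1 + e₂) → Fin n) :=
    Finset.univ.filter (fun γ => dot A B γ ≠ 0) with hT
  have hn1 : (msupport (dot A B)).ncard = T.card := by
    have h1 : msupport (dot A B) = ↑T := by
      ext γ; simp [msupport, hT]
    rw [h1, Set.ncard_coe_finset]
  have hn2 : (msupport B).ncard = S.card := by
    have h1 : msupport B = ↑S := by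
      ext α; simp [msupport, hS]
    rw [h1, Set.ncard_coe_finset]
  rw [hn1, hn2]
  have hTmem : ∀ γ ∈ T, Φ γ ∈ S := by
    intro γ hγ
    simp only [hT, Finset.mem_filter, Finset.mem_univ, true_and, hdγ γ] at hγ
    simp only [hS, Finset.mem_filter, Finset.mem_univ, true_and]
    exact hγ
  rw [Finset.card_eq_sum_card_fiberwise hTmem]
  have hfiber : ∀ α ∈ S, (T.filter (fun γ => Φ γ = α)).card = n ^ f := by
    intro α hα
    have hBα : B α ≠ 0 := by
      simpa only [hS, Finset.mem_filter, Finset.mem_univ, true_and] using hα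
    have h1 : T.filter (fun γ => Φ γ = α) = Finset.univ.filter (fun γ => Φ γ = α) := by
      ext γ
      simp only [hT, Finset.mem_filter, Finset.mem_univ, true_and]
      constructor
      · rintro ⟨_, h⟩; exact h
      · intro h
        refine ⟨?_, h⟩
        rw [hdγ γ, h]
        exact hBα
    rw [h1, ← card_sig_fiber hA (α 0)]
    refine Finset.card_nbij' (fun γ j => γ (Fin.castAdd e₂ j))
      (fun β => Fin.append β (Fin.tail α)) ?_ ?_ ?_ ?_
    · intro γ hγ
      simp only [Finset.mem_coe, Finset.mem_filter, Finset.mem_univ, true_and] at hγ ⊢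
      have h2 := congrFun hγ 0
      simpa only [hΦ, Fin.cons_zero] using h2
    · intro β hβ
      simp only [Finset.mem_coe, Finset.mem_filter, Finset.mem_univ, true_and] at hβ ⊢
      simp only [hΦ, Fin.append_left, Fin.append_right]
      rw [hβ, Fin.cons_self_tail]
    · intro γ hγ
      simp only [Finset.mem_coe, Finset.mem_filter, Finset.mem_univ, true_and] at hγ
      have hbk : (fun j => γ (Fin.natAdd (f + 1) j)) = Fin.tail α := by
        have h3 := congrArg Fin.tail hγ
        simpa only [hΦ, Fin.tail_cons] using h3
      show Fin.append (fun j => γ (Fin.castAdd e₂ j)) (Fin.tail α) = γ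
      rw [← hbk]
      exact Fin.append_castAdd_natAdd
    · intro β hβ
      funext j
      exact Fin.append_left _ _ _
  rw [Finset.sum_congr rfl hfiber, Finset.sum_const, smul_eq_mul]
  exact Nat.mul_comm _ _

end Aux

theorem dot_perm_vertex {f e₂ n : ℕ} (A : (Fin (f + 1 + 1) → Fin n) → ℝ)
    (hA : isMPerm (f + 1 + 1) n A) (B : (Fin (e₂ + 1) → Fin n) → ℝ)
    (hB : isVertex (e₂ + 1) n B) :
    isVertex (f + 1 + e₂) n (dot A B) ∧
      (msupport (dot A B)).ncard = n ^ f * (msupport B).ncard := by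
  refine ⟨⟨dot_poly hA hB.1, ?_⟩, card_msupport hA B⟩
  intro C D hC hD t ht0 ht1 h
  have hC' : C = dot A B := comp_eq hA hB hC hD ht0 ht1 h
  have hD' : D = dot A B :=
    comp_eq hA hB hD hC (t := 1 - t) (by linarith) (by linarith)
      (fun γ => by rw [h γ]; ring)
  exact ⟨hC', hD'⟩
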